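/- Let K ⊆ QC(A,A') and M ⊆ QC(B,B') be convex sets of quantum channels. Then every locally-applicable transformation S : K → M on QC preserves convex combinations: for every pair of objects X, X', every φ₀, φ₁ ∈ dExt_{X,X'}(K) and every p ∈ [0,1], S_{X,X'}(p·φ₀ + (1-p)·φ₁) = p·S_{X,X'}(φ₀) + (1-p)·S_{X,X'}(φ₁). -/

import Mathlib

noncomputable section
open scoped ComplexOrder
attribute [local instance] Classical.propDecidable
attribute [local instance] FintypeCat.fintype

/-- Square matrices over `ℂ` indexed by `A`: the operators on the Hilbert space `ℂ^A`. -/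
abbrev Mat (A : Type) : Type := Matrix A A ℂ

/-- The tensor product (Kronecker product) of two linear maps between matrix algebras. -/
noncomputable def tensorMap {A B A' B' : Type} [Fintype A] [Fintype B]
    (φ : Mat A →ₗ[ℂ] Mat A') (ψ : Mat B →ₗ[ℂ] Mat B') :
    Mat (A × B) →ₗ[ℂ] Mat (A' × B') where
  toFun X := fun p q =>
    ∑ i : A, ∑ k : A, ∑ j : B, ∑ l : B,
      X (i, j) (k, l) * (φ (Matrix.single i k 1) p.1 q.1 *
        ψ (Matrix.single j l 1) p.2 q.2)
  map_add' X Y := by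
    funext p q
    simp [Matrix.add_apply, add_mul, Finset.sum_add_distrib]; rfl
  map_smul' c X := by
    funext p q
    simp [Matrix.smul_apply, Finset.mul_sum, smul_eq_mul, mul_assoc]; erw [Matrix.smul_apply]; simp [Finset.mul_sum, smul_eq_mul, mul_assoc]

/-- Partial trace over the second tensor factor. -/
noncomputable def ptrace {A X : Type} [Fintype X] : Mat (A × X) →ₗ[ℂ] Mat A where
  toFun M := fun a b => ∑ x : X, M (a, x) (b, x)
  map_add' M N := by funext a b; simp [Matrix.add_apply, Finset.sum_add_distrib]; rfl
  map_smul' c M := by funext a b; simp [Matrix.smul_apply, Finset.mul_sum, smul_eq_mul]; erw [Matrix.smul_apply]; simp [Finset.mul_sum, smul_eq_mul, mul_assoc]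

/-- Tensoring with a fixed state on the right: `M ↦ M ⊗ ρ`. -/
noncomputable def prep {A X : Type} (ρ : Mat X) : Mat A →ₗ[ℂ] Mat (A × X) where
  toFun M := fun p q => M p.1 q.1 * ρ p.2 q.2
  map_add' M N := by funext p q; simp [Matrix.add_apply, add_mul]; rfl
  map_smul' c M := by funext p q; simp [Matrix.smul_apply, smul_eq_mul, mul_assoc]; erw [Matrix.smul_apply]; simp [Finset.mul_sum, smul_eq_mul, mul_assoc]

/-- Applying a (possibly unnormalised) effect, given by a matrix `e`, to the second
tensor factor: `id ⊗ tr(e ·)`. -/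
noncomputable def effApp {A X : Type} [Fintype X] (e : Mat X) : Mat (A × X) →ₗ[ℂ] Mat A where
  toFun M := fun a b => ∑ x : X, ∑ y : X, M (a, x) (b, y) * e y x
  map_add' M N := by funext a b; simp [Matrix.add_apply, add_mul, Finset.sum_add_distrib]; rfl
  map_smul' c M := by funext a b; simp [Matrix.smul_apply, Finset.mul_sum, smul_eq_mul, mul_assoc]; erw [Matrix.smul_apply]; simp [Finset.mul_sum, smul_eq_mul, mul_assoc]

/-- A density operator: positive semidefinite with unit trace. -/
def IsDensity {X : Type} [Fintype X] (ρ : Mat X) : Prop :=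
  ρ.PosSemidef ∧ ρ.trace = 1

/-- Complete positivity of a linear map between matrix algebras. -/
def IsCP {A A' : Type} [Fintype A] [Fintype A'] (φ : Mat A →ₗ[ℂ] Mat A') : Prop :=
  ∀ (E : FintypeCat.{0}) (X : Mat (A × E)), X.PosSemidef →
    ((tensorMap φ (LinearMap.id : Mat E →ₗ[ℂ] Mat E)) X).PosSemidef

/-- A quantum channel: a completely positive trace-preserving map. -/
def IsChannel {A A' : Type} [Fintype A] [Fintype A'] (φ : Mat A →ₗ[ℂ] Mat A') : Prop :=
  IsCP φ ∧ ∀ X : Mat A, (φ X).trace = X.trace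

/-- The dilation extension of a set `K` of channels by ancillary systems `X, X'`:
those channels `Φ : A ⊗ X → A' ⊗ X'` all of whose reductions by states on `X` and the
trace on `X'` lie in `K`. -/
def dExt {A A' : Type} [Fintype A] [Fintype A'] (K : Set (Mat A →ₗ[ℂ] Mat A'))
    (X X' : Type) [Fintype X] [Fintype X'] :
    Set (Mat (A × X) →ₗ[ℂ] Mat (A' × X')) :=
  {Φ | IsChannel Φ ∧ ∀ ρ : Mat X, IsDensity ρ → (ptrace ∘ₗ Φ ∘ₗ prep ρ) ∈ K}

/-- Closure under convex combinations. -/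
def IsConvexSet {A A' : Type} (K : Set (Mat A →ₗ[ℂ] Mat A')) : Prop :=
  ∀ φ₀ ∈ K, ∀ φ₁ ∈ K, ∀ p : ℝ, 0 ≤ p → p ≤ 1 →
    ((p : ℂ) • φ₀ + (1 - (p : ℂ)) • φ₁) ∈ K

/-- The discard-prepare channel `M ↦ tr(M) • ρ`. -/
noncomputable def discardPrep {A A' : Type} [Fintype A] (ρ : Mat A') : Mat A →ₗ[ℂ] Mat A' :=
  (Matrix.traceLinearMap A ℂ ℂ).smulRight ρ

/-- A normal set of channels: one containing every discard-prepare channel. -/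
def IsNormalSet {A A' : Type} [Fintype A] [Fintype A'] (K : Set (Mat A →ₗ[ℂ] Mat A')) : Prop :=
  ∀ ρ : Mat A', IsDensity ρ → discardPrep ρ ∈ K

/-- Matrix reassociation `(A ⊗ X) ⊗ Y → A ⊗ (X ⊗ Y)` as a linear map. -/
noncomputable def assocL (A X Y : Type) : Mat ((A × X) × Y) →ₗ[ℂ] Mat (A × (X × Y)) :=
  (Matrix.reindexLinearEquiv ℂ ℂ (Equiv.prodAssoc A X Y) (Equiv.prodAssoc A X Y)).toLinearMap

/-- Matrix reassociation `A ⊗ (X ⊗ Y) → (A ⊗ X) ⊗ Y` as a linear map. -/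
noncomputable def assocR (A X Y : Type) : Mat (A × (X × Y)) →ₗ[ℂ] Mat ((A × X) × Y) :=
  (Matrix.reindexLinearEquiv ℂ ℂ (Equiv.prodAssoc A X Y).symm
    (Equiv.prodAssoc A X Y).symm).toLinearMap

/-- `(id_{A'} ⊗ g) ∘ (Φ ⊗ id_Z) ∘ (id_A ⊗ f)`, suppressing associativity isomorphisms. -/
noncomputable def slide {A A' X X' Y Y' Z : Type}
    [Fintype A] [Fintype A'] [Fintype X] [Fintype X'] [Fintype Y] [Fintype Y'] [Fintype Z]
    (f : Mat Y →ₗ[ℂ] Mat (X × Z)) (g : Mat (X' × Z) →ₗ[ℂ] Mat Y')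
    (Φ : Mat (A × X) →ₗ[ℂ] Mat (A' × X')) : Mat (A × Y) →ₗ[ℂ] Mat (A' × Y') :=
  tensorMap (LinearMap.id : Mat A' →ₗ[ℂ] Mat A') g ∘ₗ assocL A' X' Z ∘ₗ
    tensorMap Φ (LinearMap.id : Mat Z →ₗ[ℂ] Mat Z) ∘ₗ assocR A X Z ∘ₗ
      tensorMap (LinearMap.id : Mat A →ₗ[ℂ] Mat A) f

/-- A locally-applicable transformation of type `K → M` on the category of quantum
channels: a family of functions between dilation extensions commuting with all local
actions on the ancillary systems. -/
structure LocApp {A A' B B' : Type} [Fintype A] [Fintype A'] [Fintype B] [Fintype B']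
    (K : Set (Mat A →ₗ[ℂ] Mat A')) (M : Set (Mat B →ₗ[ℂ] Mat B')) where
  app : ∀ (X X' : FintypeCat.{0}), ↥(dExt K X X') → ↥(dExt M X X')
  natural : ∀ (X X' Y Y' Z : FintypeCat.{0})
      (f : Mat Y →ₗ[ℂ] Mat (X × Z)) (g : Mat (X' × Z) →ₗ[ℂ] Mat Y'),
      IsChannel f → IsChannel g →
      ∀ (Φ : ↥(dExt K X X')) (h : slide f g Φ.1 ∈ dExt K Y Y'),
        (app Y Y' ⟨slide f g Φ.1, h⟩).1 = slide f g (app X X' Φ).1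

/-- A set of channels has control if any two members of a common dilation extension
arise as reductions of a single member by a pair of density operators. -/
def HasControl {A A' : Type} [Fintype A] [Fintype A'] (K : Set (Mat A →ₗ[ℂ] Mat A')) : Prop :=
  ∀ (X X' : FintypeCat.{0}), ∀ φ₀ ∈ dExt K X X', ∀ φ₁ ∈ dExt K X X',
    ∃ (Y Y' : FintypeCat.{0}) (Φ : Mat (A × (X × Y)) →ₗ[ℂ] Mat (A' × (X' × Y')))
      (ρ₀ ρ₁ : Mat Y),
      Φ ∈ dExt K (X × Y) (X' × Y') ∧ IsDensity ρ₀ ∧ IsDensity ρ₁ ∧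
      ptrace ∘ₗ assocR A' X' Y' ∘ₗ Φ ∘ₗ assocL A X Y ∘ₗ prep ρ₀ = φ₀ ∧
      ptrace ∘ₗ assocR A' X' Y' ∘ₗ Φ ∘ₗ assocL A X Y ∘ₗ prep ρ₁ = φ₁

/-- The Choi matrix of a linear map between matrix algebras. -/
noncomputable def choi {A A' : Type} [Fintype A] (φ : Mat A →ₗ[ℂ] Mat A') : Mat (A × A') :=
  fun p q => φ (Matrix.single p.1 q.1 1) p.2 q.2

/-- The linear map associated to a Choi matrix. -/
noncomputable def ofChoi {A A' : Type} [Fintype A] (C : Mat (A × A')) :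
    Mat A →ₗ[ℂ] Mat A' where
  toFun X := fun a' b' => ∑ a : A, ∑ b : A, X a b * C (a, a') (b, b')
  map_add' M N := by funext a b; simp [Matrix.add_apply, add_mul, Finset.sum_add_distrib]; rfl
  map_smul' c M := by funext a b; simp [Matrix.smul_apply, Finset.mul_sum, smul_eq_mul, mul_assoc]; erw [Matrix.smul_apply]; simp [Finset.mul_sum, smul_eq_mul, mul_assoc]

/-- The action of a supermap `S` (given in Choi form) on an extended channel, by tensor
extension with the identity on the ancillary systems. -/
noncomputable def supAct {A A' B B' : Type} [Fintype A] [Fintype A'] [Fintype B] [Fintype B']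
    (S : Mat (A × A') →ₗ[ℂ] Mat (B × B')) (X X' : Type) [Fintype X] [Fintype X']
    (Φ : Mat (A × X) →ₗ[ℂ] Mat (A' × X')) : Mat (B × X) →ₗ[ℂ] Mat (B' × X') :=
  ofChoi ((Matrix.reindexLinearEquiv ℂ ℂ (Equiv.prodProdProdComm B B' X X')
      (Equiv.prodProdProdComm B B' X X'))
    ((tensorMap S (LinearMap.id : Mat (X × X') →ₗ[ℂ] Mat (X × X')))
      ((Matrix.reindexLinearEquiv ℂ ℂ (Equiv.prodProdProdComm A X A' X')
        (Equiv.prodProdProdComm A X A' X')) (choi Φ))))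

/-- A quantum supermap of type `K → M`, in Choi representation: a completely positive
map on Choi operators whose tensor extension with the identity sends each dilation
extension of `K` into the corresponding dilation extension of `M`. -/
def IsSupermap {A A' B B' : Type} [Fintype A] [Fintype A'] [Fintype B] [Fintype B']
    (K : Set (Mat A →ₗ[ℂ] Mat A')) (M : Set (Mat B →ₗ[ℂ] Mat B'))
    (S : Mat (A × A') →ₗ[ℂ] Mat (B × B')) : Prop :=
  IsCP S ∧ ∀ (X X' : FintypeCat.{0}), ∀ Φ ∈ dExt K X X', supAct S X X' Φ ∈ dExt M X X'


section Helpers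
open Matrix

lemma map_eq_sum_aux {A A' : Type} [Fintype A] (φ : Mat A →ₗ[ℂ] Mat A') (W : Mat A) :
    φ W = ∑ i : A, ∑ k : A, W i k • φ (Matrix.single i k 1) := by
  conv_lhs => rw [Matrix.matrix_eq_sum_single W]
  rw [map_sum]
  refine Finset.sum_congr rfl fun i _ => ?_
  rw [map_sum]
  refine Finset.sum_congr rfl fun k _ => ?_
  rw [← _root_.map_smul, Matrix.smul_single, smul_eq_mul, mul_one]

lemma tensorMap_id_right {A A' E : Type} [Fintype A] [Fintype E]
    (φ : Mat A →ₗ[ℂ] Mat A') (W : Mat (A × E)) (p q : A' × E) :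
    tensorMap φ (LinearMap.id : Mat E →ₗ[ℂ] Mat E) W p q
      = φ (Matrix.of fun i k => W (i, p.2) (k, q.2)) p.1 q.1 := by
  conv_rhs => rw [map_eq_sum_aux φ]
  show ∑ i : A, ∑ k : A, ∑ j : E, ∑ l : E,
      W (i, j) (k, l) * (φ (Matrix.single i k 1) p.1 q.1 *
        (LinearMap.id (Matrix.single j l 1) : Mat E) p.2 q.2) = _
  rw [Matrix.sum_apply]
  refine Finset.sum_congr rfl fun i _ => ?_
  rw [Matrix.sum_apply]
  refine Finset.sum_congr rfl fun k _ => ?_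
  simp [Matrix.single, Matrix.of_apply, Matrix.smul_apply, smul_eq_mul, ite_and,
    Finset.sum_ite_eq, Finset.sum_ite_eq', mul_comm]

lemma tensorMap_id_left {A A' E : Type} [Fintype A] [Fintype E]
    (φ : Mat A →ₗ[ℂ] Mat A') (W : Mat (E × A)) (p q : E × A') :
    tensorMap (LinearMap.id : Mat E →ₗ[ℂ] Mat E) φ W p q
      = φ (Matrix.of fun j l => W (p.1, j) (q.1, l)) p.2 q.2 := by
  conv_rhs => rw [map_eq_sum_aux φ]
  show ∑ i : E, ∑ k : E, ∑ j : A, ∑ l : A,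
      W (i, j) (k, l) * ((LinearMap.id (Matrix.single i k 1) : Mat E) p.1 q.1 *
        φ (Matrix.single j l 1) p.2 q.2) = _
  simp [Matrix.single, Matrix.of_apply, Matrix.sum_apply, Matrix.smul_apply, smul_eq_mul, ite_and,
    mul_ite, ite_mul, Finset.sum_ite_irrel, Finset.sum_ite_eq, Finset.sum_ite_eq', mul_comm]

lemma psd_apply_self_nonneg {n : Type} [Fintype n] [DecidableEq n] {M : Mat n}
    (hM : M.PosSemidef) (i : n) : 0 ≤ M i i := by
  have h := hM.dotProduct_mulVec_nonneg (Pi.single i 1)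
  simpa [Matrix.mulVec_single, dotProduct, Pi.single_apply, apply_ite (star : ℂ → ℂ),
    ite_mul, Finset.sum_ite_eq] using h

lemma psd_trace_zero {n : Type} [Fintype n] [DecidableEq n] {M : Mat n}
    (hM : M.PosSemidef) (h : M.trace = 0) : M = 0 := by
  have hdiag : ∀ i, M i i = 0 := by
    by_contra hc
    push_neg at hc
    obtain ⟨i, hi⟩ := hc
    have h1 : 0 < M i i := lt_of_le_of_ne (psd_apply_self_nonneg hM i) (Ne.symm hi)
    have h2 : ∀ j, 0 ≤ M j j := psd_apply_self_nonneg hM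
    have : 0 < M.trace := by
      rw [Matrix.trace]
      exact Finset.sum_pos' (fun j _ => h2 j) ⟨i, Finset.mem_univ i, h1⟩
    rw [h] at this; exact lt_irrefl 0 this
  funext i j
  have hcol : M.mulVec (Pi.single j 1) = 0 := by
    rw [← hM.dotProduct_mulVec_zero_iff]
    simp [Matrix.mulVec_single, dotProduct, Pi.single_apply, apply_ite (star : ℂ → ℂ),
      ite_mul, Finset.sum_ite_eq, hdiag]
  have := congrFun hcol i
  simpa [Matrix.mulVec_single] using this

lemma psd_kron {m n : Type} [Fintype m] [Fintype n] {W : Mat m} {σ : Mat n}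
    (hW : W.PosSemidef) (hσ : σ.PosSemidef) :
    (Matrix.of fun (p q : m × n) => W p.1 q.1 * σ p.2 q.2).PosSemidef := by
  exact hW.kronecker hσ

lemma psd_blockdiag {ι κ : Type} [Fintype ι] [Fintype κ] [DecidableEq ι]
    (B : ι → Mat κ) (hB : ∀ i, (B i).PosSemidef) :
    (Matrix.of fun (p q : κ × ι) => if p.2 = q.2 then B p.2 p.1 q.1 else 0).PosSemidef := by
  refine Matrix.PosSemidef.of_dotProduct_mulVec_nonneg ?_ ?_
  · ext p q
    simp only [Matrix.conjTranspose_apply, Matrix.of_apply]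
    by_cases h : p.2 = q.2
    · rw [if_pos h.symm, if_pos h, ← h, (hB p.2).1.apply]
    · rw [if_neg (fun hh => h hh.symm), if_neg h, star_zero]
  · intro x
    have : dotProduct (star x)
        ((Matrix.of fun (p q : κ × ι) => if p.2 = q.2 then B p.2 p.1 q.1 else 0) *ᵥ x)
        = ∑ i : ι, dotProduct (star fun u => x (u, i))
            ((B i) *ᵥ (fun u => x (u, i))) := by
      simp only [dotProduct, Matrix.mulVec, Pi.star_apply]
      rw [Fintype.sum_prod_type]
      rw [Finset.sum_comm]
      refine Finset.sum_congr rfl fun i _ => Finset.sum_congr rfl fun u _ => ?_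
      congr 1
      rw [Fintype.sum_prod_type]
      rw [Finset.sum_comm]
      simp [ite_mul, Finset.sum_ite_eq', Finset.sum_ite_eq]
    rw [this]
    exact Finset.sum_nonneg fun i _ => (hB i).dotProduct_mulVec_nonneg _

noncomputable def compressC (A X : Type) (i : Fin 2) :
    Mat (A × (X × Fin 2)) →ₗ[ℂ] Mat (A × X) where
  toFun M := M.submatrix (fun r => (r.1, (r.2, i))) (fun r => (r.1, (r.2, i)))
  map_add' M N := rfl
  map_smul' c M := rfl

noncomputable def embedC (A X : Type) (i : Fin 2) :
    Mat (A × X) →ₗ[ℂ] Mat (A × (X × Fin 2)) where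
  toFun N := Matrix.of fun p q =>
    if p.2.2 = i ∧ q.2.2 = i then N (p.1, p.2.1) (q.1, q.2.1) else 0
  map_add' M N := by
    funext p q
    simp only [Matrix.of_apply, Matrix.add_apply]
    split <;> simp
  map_smul' c M := by
    funext p q
    simp only [Matrix.of_apply, Matrix.smul_apply, RingHom.id_apply, smul_eq_mul]
    split <;> simp

noncomputable def ctrlChan {A A' X X' : Type} [Fintype A] [Fintype A'] [Fintype X] [Fintype X']
    (Φs : Fin 2 → (Mat (A × X) →ₗ[ℂ] Mat (A' × X'))) :
    Mat (A × (X × Fin 2)) →ₗ[ℂ] Mat (A' × (X' × Fin 2)) :=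
  ∑ i : Fin 2, (embedC A' X' i) ∘ₗ Φs i ∘ₗ (compressC A X i)

lemma ctrlChan_apply {A A' X X' : Type} [Fintype A] [Fintype A'] [Fintype X] [Fintype X']
    (Φs : Fin 2 → (Mat (A × X) →ₗ[ℂ] Mat (A' × X'))) (M : Mat (A × (X × Fin 2)))
    (p q : A' × (X' × Fin 2)) :
    ctrlChan Φs M p q = if p.2.2 = q.2.2 then
      Φs p.2.2 ((compressC A X p.2.2) M) (p.1, p.2.1) (q.1, q.2.1) else 0 := by
  simp only [ctrlChan, LinearMap.sum_apply, Matrix.sum_apply, LinearMap.comp_apply, embedC,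
    LinearMap.coe_mk, AddHom.coe_mk, Matrix.of_apply, ite_and]
  simp only [@eq_comm (Fin 2) p.2.2]
  rw [Finset.sum_ite_eq' Finset.univ p.2.2 (fun i =>
    if q.2.2 = i then Φs i ((compressC A X i) M) (p.1, p.2.1) (q.1, q.2.1) else 0)]
  simp [eq_comm]

lemma psd_sum {ι n : Type} [Fintype n] (s : Finset ι) (f : ι → Mat n)
    (h : ∀ i ∈ s, (f i).PosSemidef) : (∑ i ∈ s, f i).PosSemidef :=
  Finset.sum_induction f _ (fun _ _ ha hb => ha.add hb) Matrix.PosSemidef.zero h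

lemma sum_trip {A X : Type} [Fintype A] [Fintype X] (F : A × (X × Fin 2) → ℂ) :
    ∑ p, F p = ∑ i : Fin 2, ∑ a : A, ∑ x : X, F (a, (x, i)) := by
  calc ∑ p, F p = ∑ a : A, ∑ x : X, ∑ i : Fin 2, F (a, (x, i)) := by
        rw [Fintype.sum_prod_type]
        exact Finset.sum_congr rfl fun a _ => Fintype.sum_prod_type _
    _ = ∑ a : A, ∑ i : Fin 2, ∑ x : X, F (a, (x, i)) :=
        Finset.sum_congr rfl fun a _ => Finset.sum_comm
    _ = ∑ i : Fin 2, ∑ a : A, ∑ x : X, F (a, (x, i)) := Finset.sum_comm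

lemma isChannel_ctrl {A A' X X' : Type} [Fintype A] [Fintype A'] [Fintype X] [Fintype X']
    (Φs : Fin 2 → (Mat (A × X) →ₗ[ℂ] Mat (A' × X'))) (h : ∀ i, IsChannel (Φs i)) :
    IsChannel (ctrlChan Φs) := by
  constructor
  · intro E W hW
    have key : tensorMap (ctrlChan Φs) (LinearMap.id : Mat E →ₗ[ℂ] Mat E) W =
        (Matrix.of fun (p q : ((A' × X') × E) × Fin 2) =>
          if p.2 = q.2 then
            (tensorMap (Φs p.2) (LinearMap.id : Mat E →ₗ[ℂ] Mat E)
              (W.submatrix (fun r => ((r.1.1, (r.1.2, p.2)), r.2))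
                           (fun r => ((r.1.1, (r.1.2, p.2)), r.2)))) p.1 q.1
          else 0).submatrix
            (fun p => (((p.1.1, p.1.2.1), p.2), p.1.2.2))
            (fun p => (((p.1.1, p.1.2.1), p.2), p.1.2.2)) := by
      funext p q
      obtain ⟨⟨a, x, i⟩, e⟩ := p
      obtain ⟨⟨b, y, j⟩, f⟩ := q
      rw [tensorMap_id_right]
      simp only [Matrix.submatrix_apply, Matrix.of_apply, ctrlChan_apply]
      by_cases hij : i = j
      · subst hij
        rw [if_pos rfl, if_pos rfl, tensorMap_id_right]
        rfl
      · rw [if_neg hij, if_neg hij]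
    rw [key]
    refine Matrix.PosSemidef.submatrix ?_ _
    exact psd_blockdiag (fun i => tensorMap (Φs i) (LinearMap.id : Mat E →ₗ[ℂ] Mat E)
        (W.submatrix (fun r => ((r.1.1, (r.1.2, i)), r.2))
                     (fun r => ((r.1.1, (r.1.2, i)), r.2))))
      (fun i => (h i).1 E _ (hW.submatrix _))
  · intro M
    have step1 : (ctrlChan Φs M).trace =
        ∑ i : Fin 2, ((Φs i) ((compressC A X i) M)).trace := by
      simp only [Matrix.trace, Matrix.diag]
      rw [sum_trip (fun p => ctrlChan Φs M p p)]
      refine Finset.sum_congr rfl fun i _ => ?_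
      rw [Fintype.sum_prod_type]
      refine Finset.sum_congr rfl fun a _ => Finset.sum_congr rfl fun x _ => ?_
      rw [ctrlChan_apply]
      simp
    rw [step1]
    have step2 : ∀ i, ((Φs i) ((compressC A X i) M)).trace = ((compressC A X i) M).trace :=
      fun i => (h i).2 _
    simp only [step2]
    have step3 : ∀ i : Fin 2, ((compressC A X i) M).trace
        = ∑ a : A, ∑ x : X, M (a, (x, i)) (a, (x, i)) := by
      intro i
      simp only [Matrix.trace, Matrix.diag, compressC, LinearMap.coe_mk, AddHom.coe_mk,
        Matrix.submatrix_apply]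
      rw [Fintype.sum_prod_type]
      rfl
    simp only [step3]
    rw [Matrix.trace, ← sum_trip (fun p => M p p)]
    rfl

lemma prep_smul {A X : Type} (c : ℂ) (ρ : Mat X) :
    (prep (c • ρ) : Mat A →ₗ[ℂ] Mat (A × X)) = c • prep ρ := by
  refine LinearMap.ext fun M => ?_
  funext p q
  show M p.1 q.1 * (c • ρ) p.2 q.2 = (c • (prep ρ M)) p q
  simp only [Matrix.smul_apply, smul_eq_mul]
  show M p.1 q.1 * (c * ρ p.2 q.2) = c * (M p.1 q.1 * ρ p.2 q.2)
  ring

lemma psd_smul {n : Type} [Fintype n] {ρ : Mat n} (hρ : ρ.PosSemidef) {c : ℝ} (hc : 0 ≤ c) :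
    (((c : ℂ)) • ρ).PosSemidef := by
  refine Matrix.PosSemidef.of_dotProduct_mulVec_nonneg ?_ ?_
  · rw [Matrix.IsHermitian, Matrix.conjTranspose_smul, hρ.1]
    congr 1
    simp [Complex.star_def, Complex.conj_ofReal]
  · intro x
    rw [Matrix.smul_mulVec, dotProduct_smul]
    exact mul_nonneg (by exact_mod_cast Complex.zero_le_real.mpr hc) (hρ.dotProduct_mulVec_nonneg x)

lemma psd_trace_nonneg {n : Type} [Fintype n] [DecidableEq n] {ρ : Mat n}
    (hρ : ρ.PosSemidef) : 0 ≤ ρ.trace :=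
  Finset.sum_nonneg fun i _ => psd_apply_self_nonneg hρ i

lemma reduction_smul {A A' X X' : Type} [Fintype A] [Fintype A'] [Fintype X] [Fintype X']
    (K : Set (Mat A →ₗ[ℂ] Mat A')) (k₀ : Mat A →ₗ[ℂ] Mat A') (hk₀ : k₀ ∈ K)
    (Φ : Mat (A × X) →ₗ[ℂ] Mat (A' × X'))
    (hΦ : ∀ ρ : Mat X, IsDensity ρ → (ptrace ∘ₗ Φ ∘ₗ prep ρ) ∈ K)
    (ρ : Mat X) (hρ : ρ.PosSemidef) :
    ∃ k ∈ K, ptrace ∘ₗ Φ ∘ₗ prep ρ = ρ.trace • k := by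
  by_cases h0 : ρ.trace = 0
  · refine ⟨k₀, hk₀, ?_⟩
    rw [psd_trace_zero hρ h0]
    simp only [Matrix.trace_zero, zero_smul]
    have : (prep (0 : Mat X) : Mat A →ₗ[ℂ] Mat (A × X)) = 0 := by
      rw [show (0 : Mat X) = (0 : ℂ) • (0 : Mat X) by simp, prep_smul, zero_smul]
    rw [this, LinearMap.comp_zero, LinearMap.comp_zero]
  · have hr : 0 ≤ ρ.trace := psd_trace_nonneg hρ
    obtain ⟨hr1, hr2⟩ := Complex.nonneg_iff.mp hr
    have hre : ρ.trace = ((ρ.trace.re : ℝ) : ℂ) := by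
      apply Complex.ext <;> simp [hr2]
    refine ⟨ptrace ∘ₗ Φ ∘ₗ prep (ρ.trace⁻¹ • ρ), ?_, ?_⟩
    · refine hΦ _ ⟨?_, ?_⟩
      · have h2 : ρ.trace⁻¹ = (((ρ.trace.re)⁻¹ : ℝ) : ℂ) := by
          rw [Complex.ofReal_inv, ← hre]
        rw [h2]
        exact psd_smul hρ (inv_nonneg.mpr hr1)
      · rw [Matrix.trace_smul, smul_eq_mul, inv_mul_cancel₀ h0]
    · rw [prep_smul, LinearMap.comp_smul, LinearMap.comp_smul, smul_smul,
        mul_inv_cancel₀ h0, one_smul]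

lemma ctrl_reduce {A A' X X' : Type} [Fintype A] [Fintype A'] [Fintype X] [Fintype X']
    (Φs : Fin 2 → (Mat (A × X) →ₗ[ℂ] Mat (A' × X'))) (ρ : Mat (X × Fin 2)) :
    ptrace ∘ₗ ctrlChan Φs ∘ₗ prep ρ =
      ∑ i : Fin 2, (ptrace ∘ₗ Φs i ∘ₗ
        prep (ρ.submatrix (fun x => (x, i)) (fun x => (x, i)))) := by
  refine LinearMap.ext fun M => ?_
  funext a b
  have lhs : (ptrace ∘ₗ ctrlChan Φs ∘ₗ prep ρ) M a b
      = ∑ z : X' × Fin 2, ctrlChan Φs (prep ρ M) (a, z) (b, z) := rfl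
  rw [lhs, Fintype.sum_prod_type]
  conv_lhs => rw [Finset.sum_comm]
  have rhs : (∑ i : Fin 2, (ptrace ∘ₗ Φs i ∘ₗ
        prep (ρ.submatrix (fun x => (x, i)) (fun x => (x, i))))) M a b
      = ∑ i : Fin 2, ∑ x : X', Φs i (prep (ρ.submatrix (fun x => (x, i)) (fun x => (x, i))) M)
          (a, x) (b, x) := by
    simp [Matrix.sum_apply, ptrace]
    rfl
  rw [rhs]
  refine Finset.sum_congr rfl fun i _ => Finset.sum_congr rfl fun x _ => ?_
  rw [ctrlChan_apply]
  simp only [if_pos rfl, if_true]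
  have harg : (compressC A X i) (prep ρ M)
      = prep (ρ.submatrix (fun x => (x, i)) (fun x => (x, i))) M := rfl
  rw [harg]

lemma uniform_density (X : Type) [Fintype X] [Nonempty X] :
    IsDensity (((Fintype.card X : ℂ)⁻¹) • (1 : Mat X)) := by
  constructor
  · have : ((Fintype.card X : ℂ))⁻¹ = (((Fintype.card X : ℝ)⁻¹ : ℝ) : ℂ) := by push_cast; rfl
    rw [this]
    exact psd_smul Matrix.PosSemidef.one (inv_nonneg.mpr (by positivity))
  · rw [Matrix.trace_smul, Matrix.trace_one, smul_eq_mul]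
    rw [inv_mul_cancel₀]
    exact_mod_cast Fintype.card_ne_zero

lemma ctrl_mem_dExt {A A' : Type} [Fintype A] [Fintype A'] {X X' : Type} [Fintype X] [Fintype X']
    (K : Set (Mat A →ₗ[ℂ] Mat A')) (hKconv : IsConvexSet K)
    (Φ₀ Φ₁ : Mat (A × X) →ₗ[ℂ] Mat (A' × X'))
    (h₀ : Φ₀ ∈ dExt K X X') (h₁ : Φ₁ ∈ dExt K X X') :
    ctrlChan ![Φ₀, Φ₁] ∈ dExt K (X × Fin 2) (X' × Fin 2) := by
  have hch : ∀ i : Fin 2, IsChannel (![Φ₀, Φ₁] i) := by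
    intro i
    fin_cases i
    · exact h₀.1
    · exact h₁.1
  refine ⟨isChannel_ctrl _ hch, ?_⟩
  intro ρ hρ
  have hX : Nonempty X := by
    rcases isEmpty_or_nonempty X with he | h
    · exfalso
      have h2 : ρ.trace = 0 := by
        rw [Matrix.trace]
        exact Finset.sum_eq_zero fun p _ => (he.elim p.1)
      exact one_ne_zero (hρ.2 ▸ h2)
    · exact h
  have hk₀ : (ptrace ∘ₗ Φ₀ ∘ₗ prep (((Fintype.card X : ℂ)⁻¹) • (1 : Mat X))) ∈ K :=
    h₀.2 _ (uniform_density X)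
  rw [ctrl_reduce]
  set ρ₀ := ρ.submatrix (fun x => (x, (0 : Fin 2))) (fun x => (x, (0 : Fin 2))) with hρ₀
  set ρ₁ := ρ.submatrix (fun x => (x, (1 : Fin 2))) (fun x => (x, (1 : Fin 2))) with hρ₁
  obtain ⟨k₀, hk₀K, e₀⟩ := reduction_smul K _ hk₀ Φ₀ h₀.2 ρ₀ (hρ.1.submatrix _)
  obtain ⟨k₁, hk₁K, e₁⟩ := reduction_smul K _ hk₀ Φ₁ h₁.2 ρ₁ (hρ.1.submatrix _)
  have t0 : ρ₀.trace = ∑ x : X, ρ (x, 0) (x, 0) := by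
    simp [hρ₀, Matrix.trace, Matrix.diag]
  have t1 : ρ₁.trace = ∑ x : X, ρ (x, 1) (x, 1) := by
    simp [hρ₁, Matrix.trace, Matrix.diag]
  have htr : ρ₀.trace + ρ₁.trace = 1 := by
    rw [t0, t1, ← hρ.2, Matrix.trace]
    rw [Fintype.sum_prod_type]
    simp [Fin.sum_univ_two, Finset.sum_add_distrib, Matrix.diag]
  obtain ⟨h0re, h0im⟩ := Complex.nonneg_iff.mp (psd_trace_nonneg (n := X)
    (ρ := ρ₀) (hρ.1.submatrix _))
  obtain ⟨h1re, h1im⟩ := Complex.nonneg_iff.mp (psd_trace_nonneg (n := X)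
    (ρ := ρ₁) (hρ.1.submatrix _))
  set r : ℝ := ρ₀.trace.re with hr
  have hc0 : ρ₀.trace = ((r : ℝ) : ℂ) := by apply Complex.ext <;> simp [h0im, hr]
  have hc1 : ρ₁.trace = 1 - ((r : ℝ) : ℂ) := by rw [← htr, hc0]; ring
  have hr1 : r ≤ 1 := by
    have h5 : ρ₁.trace.re = 1 - r := by rw [hc1]; simp
    rw [h5] at h1re
    linarith
  have key := hKconv k₀ hk₀K k₁ hk₁K r h0re hr1
  have hsum : ∑ i : Fin 2, (ptrace ∘ₗ ![Φ₀, Φ₁] i ∘ₗ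
        prep (ρ.submatrix (fun x => (x, i)) (fun x => (x, i))))
      = ((r : ℂ)) • k₀ + (1 - (r : ℂ)) • k₁ := by
    rw [Fin.sum_univ_two]
    simp only [Matrix.cons_val_zero, Matrix.cons_val_one, Matrix.head_cons]
    rw [← hρ₀, ← hρ₁, e₀, e₁, hc0, hc1]
  rw [hsum]
  exact key

noncomputable def fChan {X : Type} (σ : Mat (Fin 2)) :
    Mat X →ₗ[ℂ] Mat ((X × Fin 2) × PUnit) :=
  (Matrix.reindexLinearEquiv ℂ ℂ (Equiv.prodPUnit (X × Fin 2)).symm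
    (Equiv.prodPUnit (X × Fin 2)).symm).toLinearMap ∘ₗ prep σ

lemma fChan_apply {X : Type} (σ : Mat (Fin 2)) (M : Mat X) (p q : (X × Fin 2) × PUnit) :
    fChan σ M p q = M p.1.1 q.1.1 * σ p.1.2 q.1.2 := rfl

noncomputable def gChan (X' : Type) [Fintype X'] :
    Mat ((X' × Fin 2) × PUnit) →ₗ[ℂ] Mat X' :=
  ptrace ∘ₗ assocL X' (Fin 2) PUnit

lemma gChan_apply {X' : Type} [Fintype X'] (N : Mat ((X' × Fin 2) × PUnit)) (x y : X') :
    gChan X' N x y = ∑ z : Fin 2 × PUnit, N ((x, z.1), z.2) ((y, z.1), z.2) := rfl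

lemma isChannel_fChan {X : Type} [Fintype X] (σ : Mat (Fin 2))
    (hσ : σ.PosSemidef) (ht : σ.trace = 1) : IsChannel (fChan (X := X) σ) := by
  constructor
  · intro E W hW
    have key : tensorMap (fChan (X := X) σ) (LinearMap.id : Mat E →ₗ[ℂ] Mat E) W =
        (Matrix.of fun (p q : (X × E) × Fin 2) => W p.1 q.1 * σ p.2 q.2).submatrix
          (fun p => ((p.1.1.1, p.2), p.1.1.2)) (fun p => ((p.1.1.1, p.2), p.1.1.2)) := by
      funext p q
      rw [tensorMap_id_right]
      rfl
    rw [key]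
    exact (psd_kron hW hσ).submatrix _
  · intro M
    show ∑ p : (X × Fin 2) × PUnit, fChan σ M p p = M.trace
    rw [Fintype.sum_prod_type]
    simp only [fChan_apply, Fintype.sum_prod_type]
    rw [Matrix.trace]
    simp only [Finset.univ_unique, Finset.sum_const, Finset.card_singleton, one_smul]
    rw [← Finset.sum_mul_sum]
    have h2 : ∑ j : Fin 2, σ j j = 1 := ht
    rw [h2, mul_one]
    simp [Matrix.diag]

lemma isChannel_gChan {X' : Type} [Fintype X'] : IsChannel (gChan X') := by
  constructor
  · intro E W hW
    have key : tensorMap (gChan X') (LinearMap.id : Mat E →ₗ[ℂ] Mat E) W =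
        ∑ z : Fin 2 × PUnit, W.submatrix
          (fun m : X' × E => (((m.1, z.1), z.2), m.2))
          (fun m : X' × E => (((m.1, z.1), z.2), m.2)) := by
      funext p q
      rw [tensorMap_id_right]
      rw [gChan_apply]
      rw [Matrix.sum_apply]
      rfl
    rw [key]
    exact psd_sum _ _ fun z _ => hW.submatrix _
  · intro N
    show ∑ x : X', gChan X' N x x = N.trace
    simp only [gChan_apply]
    rw [Matrix.trace]
    conv_rhs => rw [Fintype.sum_prod_type]
    conv_rhs => rw [Fintype.sum_prod_type]
    refine Finset.sum_congr rfl fun x _ => ?_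
    rw [Fintype.sum_prod_type]
    rfl

lemma assocL_apply (A X Y : Type) (M : Mat ((A × X) × Y)) (p q : A × (X × Y)) :
    assocL A X Y M p q = M ((p.1, p.2.1), p.2.2) ((q.1, q.2.1), q.2.2) := rfl

lemma assocR_apply (A X Y : Type) (M : Mat (A × (X × Y))) (p q : (A × X) × Y) :
    assocR A X Y M p q = M (p.1.1, (p.1.2, p.2)) (q.1.1, (q.1.2, q.2)) := rfl

lemma slide_fg_apply {A A' X X' : Type} [Fintype A] [Fintype A'] [Fintype X] [Fintype X']
    (σ : Mat (Fin 2)) (Ψ : Mat (A × (X × Fin 2)) →ₗ[ℂ] Mat (A' × (X' × Fin 2)))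
    (M : Mat (A × X)) (p q : A' × X') :
    slide (fChan σ) (gChan X') Ψ M p q =
      ∑ i : Fin 2, Ψ (Matrix.of fun r s : A × (X × Fin 2) =>
          M (r.1, r.2.1) (s.1, s.2.1) * σ r.2.2 s.2.2)
        (p.1, (p.2, i)) (q.1, (q.2, i)) := by
  unfold slide
  simp only [LinearMap.comp_apply]
  rw [tensorMap_id_left]
  rw [gChan_apply]
  rw [Fintype.sum_prod_type]
  simp only [Finset.univ_unique, Finset.sum_singleton]
  refine Finset.sum_congr rfl fun i _ => ?_
  simp only [Matrix.of_apply, assocL_apply]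
  rw [tensorMap_id_right]
  have harg : (Matrix.of fun m n : A × (X × Fin 2) =>
      (assocR A (X × Fin 2) PUnit) ((tensorMap (LinearMap.id : Mat A →ₗ[ℂ] Mat A) (fChan σ)) M)
        (m, PUnit.unit) (n, PUnit.unit))
      = (Matrix.of fun r s : A × (X × Fin 2) =>
          M (r.1, r.2.1) (s.1, s.2.1) * σ r.2.2 s.2.2) := by
    funext m n
    rw [Matrix.of_apply, assocR_apply, tensorMap_id_left, fChan_apply]
    rfl
  show Ψ (Matrix.of fun m n : A × (X × Fin 2) =>
      (assocR A (X × Fin 2) PUnit) ((tensorMap (LinearMap.id : Mat A →ₗ[ℂ] Mat A) (fChan σ)) M)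
        (m, PUnit.unit) (n, PUnit.unit)) _ _ = _
  rw [harg]

lemma slide_ctrl {A A' X X' : Type} [Fintype A] [Fintype A'] [Fintype X] [Fintype X']
    (σ : Mat (Fin 2)) (Φs : Fin 2 → (Mat (A × X) →ₗ[ℂ] Mat (A' × X'))) :
    slide (fChan σ) (gChan X') (ctrlChan Φs) = σ 0 0 • Φs 0 + σ 1 1 • Φs 1 := by
  refine LinearMap.ext fun M => ?_
  funext p q
  rw [slide_fg_apply]
  have term : ∀ i : Fin 2, ctrlChan Φs (Matrix.of fun r s : A × (X × Fin 2) =>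
      M (r.1, r.2.1) (s.1, s.2.1) * σ r.2.2 s.2.2) (p.1, (p.2, i)) (q.1, (q.2, i))
      = σ i i * Φs i M p q := by
    intro i
    rw [ctrlChan_apply]
    simp only [if_pos rfl, if_true]
    have harg : (compressC A X i) (Matrix.of fun r s : A × (X × Fin 2) =>
        M (r.1, r.2.1) (s.1, s.2.1) * σ r.2.2 s.2.2) = σ i i • M := by
      funext m n
      show M (m.1, m.2) (n.1, n.2) * σ i i = σ i i * M m n
      rw [mul_comm]
    rw [harg, _root_.map_smul]
    rfl
  simp only [term]
  rw [Fin.sum_univ_two]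
  simp [Matrix.add_apply, Matrix.smul_apply, smul_eq_mul]

lemma slide_sigma_comb {A A' X X' : Type} [Fintype A] [Fintype A'] [Fintype X] [Fintype X']
    (c : ℂ) (σ τ : Mat (Fin 2)) (Ψ : Mat (A × (X × Fin 2)) →ₗ[ℂ] Mat (A' × (X' × Fin 2))) :
    slide (fChan (c • σ + (1 - c) • τ)) (gChan X') Ψ
      = c • slide (fChan σ) (gChan X') Ψ + (1 - c) • slide (fChan τ) (gChan X') Ψ := by
  refine LinearMap.ext fun M => ?_
  funext p q
  rw [show ((c • slide (fChan σ) (gChan X') Ψ + (1 - c) • slide (fChan τ) (gChan X') Ψ) M) p q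
    = c * (slide (fChan σ) (gChan X') Ψ M p q) + (1 - c) * (slide (fChan τ) (gChan X') Ψ M p q)
    from rfl]
  rw [slide_fg_apply, slide_fg_apply, slide_fg_apply]
  have harg : (Matrix.of fun r s : A × (X × Fin 2) =>
        M (r.1, r.2.1) (s.1, s.2.1) * (c • σ + (1 - c) • τ) r.2.2 s.2.2)
      = c • (Matrix.of fun r s : A × (X × Fin 2) =>
          M (r.1, r.2.1) (s.1, s.2.1) * σ r.2.2 s.2.2)
        + (1 - c) • (Matrix.of fun r s : A × (X × Fin 2) =>
          M (r.1, r.2.1) (s.1, s.2.1) * τ r.2.2 s.2.2) := by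
    funext m n
    show M (m.1, m.2.1) (n.1, n.2.1) * (c * σ m.2.2 n.2.2 + (1 - c) * τ m.2.2 n.2.2)
      = c * (M (m.1, m.2.1) (n.1, n.2.1) * σ m.2.2 n.2.2)
        + (1 - c) * (M (m.1, m.2.1) (n.1, n.2.1) * τ m.2.2 n.2.2)
    ring
  rw [harg]
  simp only [map_add, _root_.map_smul, Matrix.add_apply, Matrix.smul_apply, smul_eq_mul]
  rw [Finset.sum_add_distrib, Finset.mul_sum, Finset.mul_sum]

lemma psd_std (i : Fin 2) : (Matrix.single i i (1:ℂ)).PosSemidef := by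
  have : Matrix.single i i (1:ℂ) = Matrix.diagonal (Pi.single i 1) := by
    funext a b
    simp only [Matrix.single, Matrix.of_apply, Matrix.diagonal, Pi.single_apply]
    by_cases h1 : i = a <;> by_cases h2 : a = b <;> simp [h1, h2] <;> aesop
  rw [this]
  refine Matrix.PosSemidef.diagonal ?_
  intro j
  by_cases h : j = i <;> simp [Pi.single_apply, h] <;> first | exact zero_le_one | exact le_refl 0

lemma trace_std (i : Fin 2) : (Matrix.single i i (1:ℂ)).trace = 1 := by
  simp [Matrix.trace, Matrix.diag, Matrix.single, Finset.sum_ite_eq]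

lemma std_apply (i a b : Fin 2) :
    Matrix.single i i (1:ℂ) a b = if i = a ∧ i = b then 1 else 0 := rfl

end Helpers

/-- Every locally-applicable transformation between convex sets of
quantum channels preserves convex combinations. -/
theorem locApp_convex_linear (A A' B B' : FintypeCat.{0})
    (K : Set (Mat A →ₗ[ℂ] Mat A')) (M : Set (Mat B →ₗ[ℂ] Mat B'))
    (hK : ∀ φ ∈ K, IsChannel φ) (hM : ∀ φ ∈ M, IsChannel φ)
    (hKconv : IsConvexSet K) (hMconv : IsConvexSet M)
    (S : LocApp K M) (X X' : FintypeCat.{0})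
    (Φ₀ Φ₁ : ↥(dExt K X X')) (p : ℝ) (hp0 : 0 ≤ p) (hp1 : p ≤ 1)
    (h : (p : ℂ) • Φ₀.1 + (1 - (p : ℂ)) • Φ₁.1 ∈ dExt K X X') :
    (S.app X X' ⟨(p : ℂ) • Φ₀.1 + (1 - (p : ℂ)) • Φ₁.1, h⟩).1 =
      (p : ℂ) • (S.app X X' Φ₀).1 + (1 - (p : ℂ)) • (S.app X X' Φ₁).1 := by
  classical
  set σ0 : Mat (Fin 2) := Matrix.single (0 : Fin 2) 0 (1:ℂ) with hσ0def
  set σ1 : Mat (Fin 2) := Matrix.single (1 : Fin 2) 1 (1:ℂ) with hσ1def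
  set σp : Mat (Fin 2) := (p : ℂ) • σ0 + (1 - (p : ℂ)) • σ1 with hσpdef
  set XF : FintypeCat.{0} := FintypeCat.of (↥X × Fin 2) with hXF
  set XF' : FintypeCat.{0} := FintypeCat.of (↥X' × Fin 2) with hXF'
  set U : FintypeCat.{0} := FintypeCat.of PUnit with hU
  set Φs : Fin 2 → (Mat (↥A × ↥X) →ₗ[ℂ] Mat (↥A' × ↥X')) := ![Φ₀.1, Φ₁.1] with hΦs
  have hΦs0 : Φs 0 = Φ₀.1 := rfl
  have hΦs1 : Φs 1 = Φ₁.1 := rfl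
  have hΨ : ctrlChan Φs ∈ dExt K ↥XF ↥XF' :=
    ctrl_mem_dExt K hKconv Φ₀.1 Φ₁.1 Φ₀.2 Φ₁.2
  have hg : IsChannel (gChan ↥X') := isChannel_gChan
  have hf0 : IsChannel (fChan (X := ↥X) σ0) := isChannel_fChan σ0 (psd_std 0) (trace_std 0)
  have hf1 : IsChannel (fChan (X := ↥X) σ1) := isChannel_fChan σ1 (psd_std 1) (trace_std 1)
  have hfp : IsChannel (fChan (X := ↥X) σp) := by
    refine isChannel_fChan σp ?_ ?_
    · have c1 : (1 - (p : ℂ)) = (((1 - p : ℝ)) : ℂ) := by push_cast; ring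
      rw [hσpdef, c1]
      exact (psd_smul (psd_std 0) hp0).add (psd_smul (psd_std 1) (by linarith))
    · rw [hσpdef, Matrix.trace_add, Matrix.trace_smul, Matrix.trace_smul,
        trace_std, trace_std]
      simp
  have sc0 : slide (fChan σ0) (gChan ↥X') (ctrlChan Φs) = Φ₀.1 := by
    rw [slide_ctrl, hΦs0, hΦs1]
    have e00 : σ0 0 0 = 1 := rfl
    have e11 : σ0 1 1 = 0 := rfl
    rw [e00, e11, one_smul, zero_smul, add_zero]
  have sc1 : slide (fChan σ1) (gChan ↥X') (ctrlChan Φs) = Φ₁.1 := by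
    rw [slide_ctrl, hΦs0, hΦs1]
    have e00 : σ1 0 0 = 0 := rfl
    have e11 : σ1 1 1 = 1 := rfl
    rw [e00, e11, one_smul, zero_smul, zero_add]
  have scp : slide (fChan σp) (gChan ↥X') (ctrlChan Φs)
      = (p : ℂ) • Φ₀.1 + (1 - (p : ℂ)) • Φ₁.1 := by
    rw [slide_ctrl, hΦs0, hΦs1]
    have e00 : σp 0 0 = (p : ℂ) := by
      rw [hσpdef]
      simp only [Matrix.add_apply, Matrix.smul_apply, smul_eq_mul]
      rw [show σ0 0 0 = 1 from rfl, show σ1 0 0 = 0 from rfl]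
      ring
    have e11 : σp 1 1 = 1 - (p : ℂ) := by
      rw [hσpdef]
      simp only [Matrix.add_apply, Matrix.smul_apply, smul_eq_mul]
      rw [show σ0 1 1 = 0 from rfl, show σ1 1 1 = 1 from rfl]
      ring
    rw [e00, e11]
  have h0' : slide (fChan σ0) (gChan ↥X') (ctrlChan Φs) ∈ dExt K ↥X ↥X' := by
    rw [sc0]; exact Φ₀.2
  have h1' : slide (fChan σ1) (gChan ↥X') (ctrlChan Φs) ∈ dExt K ↥X ↥X' := by
    rw [sc1]; exact Φ₁.2
  have hp' : slide (fChan σp) (gChan ↥X') (ctrlChan Φs) ∈ dExt K ↥X ↥X' := by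
    rw [scp]; exact h
  have app_congr : ∀ Φa Φb : ↥(dExt K ↥X ↥X'), Φa.1 = Φb.1 →
      (S.app X X' Φa).1 = (S.app X X' Φb).1 := fun Φa Φb e => by rw [Subtype.ext e]
  have E0 := S.natural XF XF' X X' U (fChan σ0) (gChan ↥X') (by convert hf0) (by convert hg)
    ⟨ctrlChan Φs, by convert hΨ⟩ (by convert h0')
  have E1 := S.natural XF XF' X X' U (fChan σ1) (gChan ↥X') (by convert hf1) (by convert hg)
    ⟨ctrlChan Φs, by convert hΨ⟩ (by convert h1')
  have Ep := S.natural XF XF' X X' U (fChan σp) (gChan ↥X') (by convert hfp) (by convert hg)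
    ⟨ctrlChan Φs, by convert hΨ⟩ (by convert hp')
  rw [app_congr _ Φ₀ ?_] at E0
  rotate_left
  · convert sc0
  rw [app_congr _ Φ₁ ?_] at E1
  rotate_left
  · convert sc1
  rw [app_congr _ ⟨(p : ℂ) • Φ₀.1 + (1 - (p : ℂ)) • Φ₁.1, h⟩ ?_] at Ep
  rotate_left
  · convert scp
  rw [Ep, E0, E1, hσpdef]
  convert slide_sigma_comb (p : ℂ) σ0 σ1 (S.app XF XF' ⟨ctrlChan Φs, by convert hΨ⟩).1
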